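/- Let c_5 = 318434429, c_6 = 18335373238, and suppose c_{n+2} ≥ 1248·c_n for all n ≥ 5. If h > 0 satisfies Σ_{n≥1} c_n h^{−n} ≤ 1 where c_1 = 46, c_2 = 0, c_3 = 74130, c_4 = 867346, and 1/h² < 1/1248, then P_6(1/h) + (c_5 h^{−7} + c_6 h^{−8})/(1/1248 − h^{−2}) ≤ 1, and consequently h > 78.32. -/

import Mathlib

set_option maxHeartbeats 1000000 in
/-- With `c 1 = 46`, `c 2 = 0`, `c 3 = 74130`, `c 4 = 867346`, `c 5 = 318434429`,
`c 6 = 18335373238`, `c (n+2) ≥ 1248 c n` for `n ≥ 5`, if `h > 0` satisfies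
`∑_{n≥1} c n h^{-n} ≤ 1` (all partial sums) and `1/h² < 1/1248`, then
`P₆(1/h) + (c₅ h⁻⁷ + c₆ h⁻⁸)/(1/1248 − h⁻²) ≤ 1` and consequently `h > 78.32`. -/
theorem stmt16 (c : ℕ → ℝ) (h : ℝ)
    (hc1 : c 1 = 46) (hc2 : c 2 = 0) (hc3 : c 3 = 74130) (hc4 : c 4 = 867346)
    (hc5 : c 5 = 318434429) (hc6 : c 6 = 18335373238)
    (hcnn : ∀ n, 0 ≤ c n)
    (hgrow : ∀ n, 5 ≤ n → 1248 * c n ≤ c (n + 2))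
    (hh : 0 < h)
    (hsum : ∀ N : ℕ, ∑ n ∈ Finset.Icc 1 N, c n * (1 / h) ^ n ≤ 1)
    (hsmall : 1 / h ^ 2 < 1 / 1248) :
    (46 * (1 / h) + 74130 * (1 / h) ^ 3 + 867346 * (1 / h) ^ 4
        + 318434429 * (1 / h) ^ 5 + 18335373238 * (1 / h) ^ 6)
      + (318434429 * (1 / h) ^ 7 + 18335373238 * (1 / h) ^ 8)
          / (1 / 1248 - (1 / h) ^ 2) ≤ 1 ∧
    78.32 < h := by
  set x : ℝ := 1 / h with hxdef
  have hx : 0 < x := by positivity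
  have hx2 : x ^ 2 < 1 / 1248 := by
    have : x ^ 2 = 1 / h ^ 2 := by rw [hxdef]; field_simp
    rw [this]; exact hsmall
  set r : ℝ := 1248 * x ^ 2 with hrdef
  have hr0 : 0 ≤ r := by positivity
  have hr1 : r < 1 := by
    have := hx2
    rw [hrdef]; nlinarith
  set A : ℝ := 318434429 * x ^ 5 + 18335373238 * x ^ 6 with hAdef
  set P : ℝ := 46 * x + 74130 * x ^ 3 + 867346 * x ^ 4
        + 318434429 * x ^ 5 + 18335373238 * x ^ 6 with hPdef
  -- growth of coefficients
  have hg5 : ∀ k : ℕ, (1248 : ℝ) ^ k * c 5 ≤ c (5 + 2 * k) := by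
    intro k
    induction k with
    | zero => simp
    | succ k ih =>
      have h1 : (1248 : ℝ) ^ (k+1) * c 5 = 1248 * ((1248:ℝ)^k * c 5) := by ring
      have h2 : 1248 * ((1248:ℝ)^k * c 5) ≤ 1248 * c (5 + 2*k) := by nlinarith
      have h3 := hgrow (5 + 2*k) (by omega)
      have : 5 + 2*k + 2 = 5 + 2*(k+1) := by omega
      rw [this] at h3
      linarith
  have hg6 : ∀ k : ℕ, (1248 : ℝ) ^ k * c 6 ≤ c (6 + 2 * k) := by
    intro k
    induction k with
    | zero => simp
    | succ k ih =>
      have h2 : 1248 * ((1248:ℝ)^k * c 6) ≤ 1248 * c (6 + 2*k) := by nlinarith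
      have h3 := hgrow (6 + 2*k) (by omega)
      have : 6 + 2*k + 2 = 6 + 2*(k+1) := by omega
      rw [this] at h3
      have h1 : (1248 : ℝ) ^ (k+1) * c 6 = 1248 * ((1248:ℝ)^k * c 6) := by ring
      linarith
  -- key partial-sum bound
  have hmain : ∀ K : ℕ, P + A * r * ∑ k ∈ Finset.range K, r ^ k
      ≤ ∑ n ∈ Finset.Icc 1 (6 + 2 * K), c n * x ^ n := by
    intro K
    induction K with
    | zero =>
      simp only [Nat.mul_zero, Nat.add_zero, Finset.range_zero, Finset.sum_empty,
        mul_zero, add_zero]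
      rw [show Finset.Icc 1 6 = {1,2,3,4,5,6} from by decide, hPdef]
      rw [Finset.sum_insert (by decide), Finset.sum_insert (by decide),
        Finset.sum_insert (by decide), Finset.sum_insert (by decide),
        Finset.sum_insert (by decide), Finset.sum_singleton]
      rw [hc1, hc2, hc3, hc4, hc5, hc6]
      ring_nf
      linarith [sq_nonneg x]
    | succ K ih =>
      rw [show 6 + 2*(K+1) = (6+2*K+1)+1 from by omega,
        Finset.sum_Icc_succ_top (by omega : 1 ≤ (6+2*K+1)+1),
        Finset.sum_Icc_succ_top (by omega : 1 ≤ 6+2*K+1),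
        Finset.sum_range_succ]
      have t1 : A * r ^ (K+1) ≤ c (6+2*K+1) * x ^ (6+2*K+1)
          + c (6+2*K+1+1) * x ^ (6+2*K+1+1) := by
        have h5 := hg5 (K+1)
        have h6 := hg6 (K+1)
        have e5 : 6 + 2*K + 1 = 5 + 2*(K+1) := by omega
        have e6 : 6 + 2*K + 1 + 1 = 6 + 2*(K+1) := by omega
        rw [e6, e5]
        have hxp : (0:ℝ) ≤ x ^ (5 + 2*(K+1)) := by positivity
        have hxp6 : (0:ℝ) ≤ x ^ (6 + 2*(K+1)) := by positivity
        have q5 := mul_le_mul_of_nonneg_right h5 hxp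
        have q6 := mul_le_mul_of_nonneg_right h6 hxp6
        have eA : A * r ^ (K+1) = (1248:ℝ)^(K+1) * c 5 * x ^ (5 + 2*(K+1))
            + (1248:ℝ)^(K+1) * c 6 * x ^ (6 + 2*(K+1)) := by
          rw [hAdef, hrdef, hc5, hc6, mul_pow, ← pow_mul,
            show 5 + 2*(K+1) = 5 + 2*(K+1) from rfl]
          rw [pow_add, pow_add, pow_mul]
          ring
        rw [eA]
        linarith
      have : P + A * r * (∑ k ∈ Finset.range K, r ^ k + r ^ K)
          = (P + A * r * ∑ k ∈ Finset.range K, r ^ k) + A * r ^ (K+1) := by ring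
      rw [this]
      linarith
  have key : ∀ K : ℕ, P + A * r * ∑ k ∈ Finset.range K, r ^ k ≤ 1 :=
    fun K => le_trans (hmain K) (hsum _)
  -- pass to the limit
  have hlim : Filter.Tendsto (fun K => P + A * r * ∑ k ∈ Finset.range K, r ^ k)
      Filter.atTop (nhds (P + A * r * (1 - r)⁻¹)) := by
    apply Filter.Tendsto.const_add
    apply Filter.Tendsto.const_mul
    exact hasSum_geometric_of_lt_one hr0 hr1 |>.tendsto_sum_nat
  have hineq : P + A * r * (1 - r)⁻¹ ≤ 1 :=
    le_of_tendsto' hlim key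
  have hden : (0:ℝ) < 1 / 1248 - x ^ 2 := by linarith
  have heq : A * r * (1 - r)⁻¹ = (318434429 * x ^ 7 + 18335373238 * x ^ 8) / (1 / 1248 - x ^ 2) := by
    rw [hAdef, hrdef]
    have h1r : (1:ℝ) - 1248 * x ^ 2 ≠ 0 := by nlinarith
    have h2 : (1:ℝ) / 1248 - x ^ 2 ≠ 0 := by linarith
    field_simp
  rw [heq] at hineq
  have part1 : P + (318434429 * x ^ 7 + 18335373238 * x ^ 8) / (1 / 1248 - x ^ 2) ≤ 1 := hineq
  refine ⟨part1, ?_⟩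
  by_contra hle
  push_neg at hle
  have hx0 : (25 : ℝ) / 1958 ≤ x := by
    rw [hxdef]
    rw [div_le_div_iff₀ (by norm_num) hh]
    nlinarith [hle]
  obtain ⟨x0, hx0def⟩ : ∃ y : ℝ, y = 25 / 1958 := ⟨_, rfl⟩
  rw [← hx0def] at hx0
  have hmono : (46 * x0 + 74130 * x0 ^ 3 + 867346 * x0 ^ 4
        + 318434429 * x0 ^ 5 + 18335373238 * x0 ^ 6)
      + (318434429 * x0 ^ 7 + 18335373238 * x0 ^ 8) / (1 / 1248 - x0 ^ 2)
      ≤ P + (318434429 * x ^ 7 + 18335373238 * x ^ 8) / (1 / 1248 - x ^ 2) := by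
    have hx0pos : (0:ℝ) < x0 := by rw [hx0def]; norm_num
    have hP : 46 * x0 + 74130 * x0 ^ 3 + 867346 * x0 ^ 4
        + 318434429 * x0 ^ 5 + 18335373238 * x0 ^ 6 ≤ P := by
      rw [hPdef]; gcongr
    have hnum : 318434429 * x0 ^ 7 + 18335373238 * x0 ^ 8
        ≤ 318434429 * x ^ 7 + 18335373238 * x ^ 8 := by gcongr
    have hdenle : 1 / 1248 - x ^ 2 ≤ 1 / 1248 - x0 ^ 2 := by
      have : x0 ^ 2 ≤ x ^ 2 := by gcongr
      linarith
    have hdiv : (318434429 * x0 ^ 7 + 18335373238 * x0 ^ 8) / (1 / 1248 - x0 ^ 2)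
        ≤ (318434429 * x ^ 7 + 18335373238 * x ^ 8) / (1 / 1248 - x ^ 2) :=
      div_le_div₀ (by positivity) hnum hden hdenle
    linarith
  have hval : (1:ℝ) < (46 * x0 + 74130 * x0 ^ 3 + 867346 * x0 ^ 4
        + 318434429 * x0 ^ 5 + 18335373238 * x0 ^ 6)
      + (318434429 * x0 ^ 7 + 18335373238 * x0 ^ 8) / (1 / 1248 - x0 ^ 2) := by
    rw [hx0def]
    norm_num
  linarith
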